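/- Let r : L → L be the ℤ-linear map determined on the basis by r(H₁) = H₁, r(H₂) = 4H₁ + H₂ − E₁ − ⋯ − E₈, and r(E_i) = H₁ − E_i for i = 1, …, 8 (the Picard action of the involution r of the paper). Let T be the Kac translation T_α with α = E₁ − E₂ (the translation sending E₂ to E₁), and set λ = 3H₁ + 2H₂ − 2E₁ − E₃ − E₄ − ⋯ − E₈. Then r(δ) = δ and r(T(λ)) = λ. -/
import Mathlib


/-! The Picard lattice of the blow-up of `ℙ¹×ℙ¹` at eight points, the involution `r`
and the Kac translation `T_{E₁−E₂}`; the relations `r(δ) = δ` and `r(T(λ)) = λ` for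
λ = 3H₁ + 2H₂ − 2E₁ − E₃ − ⋯ − E₈. -/

noncomputable section

/-- The class `H₁`. -/
def H1 : Fin 10 → ℤ := Pi.single 0 1

/-- The class `H₂`. -/
def H2 : Fin 10 → ℤ := Pi.single 1 1

/-- `Ee j` is the class `E_{j+1}` of the `(j+1)`-st exceptional divisor. -/
def Ee (j : Fin 8) : Fin 10 → ℤ := Pi.single j.succ.succ 1

/-- The intersection form: `⟨H₁,H₂⟩ = ⟨H₂,H₁⟩ = 1`, `⟨E_j,E_j⟩ = −1`, all other
pairings of basis elements zero. -/
def pform (β γ : Fin 10 → ℤ) : ℤ :=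
  β 0 * γ 1 + β 1 * γ 0 - ∑ j : Fin 8, β j.succ.succ * γ j.succ.succ

/-- The null root `δ = 2H₁ + 2H₂ − E₁ − ⋯ − E₈`. -/
def pdelta : Fin 10 → ℤ := 2 • H1 + 2 • H2 - ∑ j : Fin 8, Ee j

/-- The Kac translation `T_α(β) = β + ⟨δ,β⟩α − (⟨δ,β⟩⟨α,α⟩/2 + ⟨α,β⟩)δ`. -/
def Tkac (α β : Fin 10 → ℤ) : Fin 10 → ℤ :=
  β + pform pdelta β • α - (pform pdelta β * pform α α / 2 + pform α β) • pdelta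

/-- The Picard action of the involution `r`: `r(H₁) = H₁`,
`r(H₂) = 4H₁ + H₂ − E₁ − ⋯ − E₈`, `r(E_i) = H₁ − E_i`, extended `ℤ`-linearly. -/
def rmap (β : Fin 10 → ℤ) : Fin 10 → ℤ :=
  β 0 • H1 + β 1 • (4 • H1 + H2 - ∑ j : Fin 8, Ee j)
    + ∑ j : Fin 8, β j.succ.succ • (H1 - Ee j)

/-- `r(δ) = δ` and `r(T(λ)) = λ`, where `T = T_{E₁−E₂}` and
`λ = 3H₁ + 2H₂ − 2E₁ − E₃ − E₄ − ⋯ − E₈`. -/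
theorem r_T_lambda :
    rmap pdelta = pdelta ∧
    rmap (Tkac (Ee 0 - Ee 1)
        (3 • H1 + 2 • H2 - 2 • Ee 0 - (Ee 2 + Ee 3 + Ee 4 + Ee 5 + Ee 6 + Ee 7)))
      = 3 • H1 + 2 • H2 - 2 • Ee 0 - (Ee 2 + Ee 3 + Ee 4 + Ee 5 + Ee 6 + Ee 7) := by
  constructor <;> · funext i; fin_cases i <;> decide

end
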